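/- Let L be a unipotent symmetric Latin square of order n > 2 that possesses an autotopism of the form (θ, θ⁻¹, ε) with θ ≠ ε. Then θ is a fixed-point-free involution (every cycle of θ has length 2) and n ≡ 0 (mod 4). -/

import Mathlib

/-- A Latin square of order `n`: each row and each column is a bijection. -/
def IsLatin {n : ℕ} (L : Fin n → Fin n → Fin n) : Prop :=
  (∀ i, Function.Bijective (L i)) ∧ (∀ j, Function.Bijective fun i => L i j)

/-- `L` is symmetric: `L(i,j) = L(j,i)`. -/
def IsSymmetric {n : ℕ} (L : Fin n → Fin n → Fin n) : Prop :=
  ∀ i j, L i j = L j i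

/-- `L` is semisymmetric: `L(i,j) = k → L(j,k) = i`. -/
def IsSemisymmetric {n : ℕ} (L : Fin n → Fin n → Fin n) : Prop :=
  ∀ i j, L j (L i j) = i

/-- Totally symmetric: symmetric and semisymmetric. -/
def IsTotallySymmetric {n : ℕ} (L : Fin n → Fin n → Fin n) : Prop :=
  IsSymmetric L ∧ IsSemisymmetric L

/-- Reduced: the first row and first column are in natural order. -/
def IsReducedLS {n : ℕ} (L : Fin n → Fin n → Fin n) : Prop :=
  ∀ i j : Fin n, ((i : ℕ) = 0 → L i j = j) ∧ ((j : ℕ) = 0 → L i j = i)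

/-- Idempotent: `L(i,i) = i` for all `i`. -/
def IsIdempotent {n : ℕ} (L : Fin n → Fin n → Fin n) : Prop :=
  ∀ i, L i i = i

/-- Unipotent: all diagonal entries are equal. -/
def IsUnipotent {n : ℕ} (L : Fin n → Fin n → Fin n) : Prop :=
  ∀ i j, L i i = L j j

/-- `B` is isotopic to `A`: `B = A(α,β,γ)`. -/
def Isotopic {n : ℕ} (A B : Fin n → Fin n → Fin n) : Prop :=
  ∃ α β γ : Equiv.Perm (Fin n), ∀ i j, B (α i) (β j) = γ (A i j)

/-- `B` is rrs-isotopic to `A`: `B = A(α,α,γ)`. -/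
def RrsIsotopic {n : ℕ} (A B : Fin n → Fin n → Fin n) : Prop :=
  ∃ α γ : Equiv.Perm (Fin n), ∀ i j, B (α i) (α j) = γ (A i j)

/-- `B` is isomorphic to `A`: `B = A(α,α,α)`. -/
def Isomorphic {n : ℕ} (A B : Fin n → Fin n → Fin n) : Prop :=
  ∃ α : Equiv.Perm (Fin n), ∀ i j, B (α i) (α j) = α (A i j)

/-- `B` is one of the six conjugates of `A`, obtained by uniformly permuting
the coordinates of the triples `(i, j, A i j)`. -/
def IsConjugate {n : ℕ} (A B : Fin n → Fin n → Fin n) : Prop :=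
  (∀ i j, B i j = A i j) ∨ (∀ i j, B j i = A i j) ∨
  (∀ i j, B (A i j) j = i) ∨ (∀ i j, B i (A i j) = j) ∨
  (∀ i j, B j (A i j) = i) ∨ (∀ i j, B (A i j) i = j)

/-- `B` is paratopic to `A`: `B` is isotopic to some conjugate of `A`. -/
def Paratopic {n : ℕ} (A B : Fin n → Fin n → Fin n) : Prop :=
  ∃ C : Fin n → Fin n → Fin n, IsConjugate A C ∧ Isotopic C B

theorem stmt11 {n : ℕ} (hn : 2 < n) (L : Fin n → Fin n → Fin n)
    (hL : IsLatin L) (hs : IsSymmetric L) (hu : IsUnipotent L)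
    (θ : Equiv.Perm (Fin n)) (hθ : θ ≠ 1)
    (haut : ∀ i j, L (θ i) (θ⁻¹ j) = L i j) :
    (∀ x, θ x ≠ x) ∧ θ * θ = 1 ∧ n % 4 = 0 := by
  classical
  have h0 : (0 : ℕ) < n := by omega
  have hdiag : ∀ i : Fin n, L i i = L ⟨0, h0⟩ ⟨0, h0⟩ := fun i => hu i ⟨0, h0⟩
  have hrowinj : ∀ i : Fin n, Function.Injective (L i) := fun i => (hL.1 i).injective
  have hceq : ∀ i j : Fin n, L i j = L ⟨0, h0⟩ ⟨0, h0⟩ → j = i := fun i j h =>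
    hrowinj i (h.trans (hdiag i).symm)
  have h2 : ∀ i, θ (θ i) = i := by
    intro i
    have h1 : L (θ i) (θ⁻¹ i) = L ⟨0, h0⟩ ⟨0, h0⟩ := (haut i i).trans (hdiag i)
    have h3 := hceq _ _ h1
    have h4 := congrArg θ h3
    rw [show θ (θ⁻¹ i) = i from θ.apply_symm_apply i] at h4
    exact h4.symm
  have hinv : ∀ j, θ⁻¹ j = θ j := by
    intro j
    apply θ.injective
    rw [show θ (θ⁻¹ j) = j from θ.apply_symm_apply j, h2]
  have haut2 : ∀ i j, L (θ i) (θ j) = L i j := fun i j => by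
    rw [← hinv j]; exact haut i j
  have hfpf : ∀ x, θ x ≠ x := by
    intro x hx
    apply hθ
    apply Equiv.ext
    intro j
    have hthis := haut2 x j
    rw [hx] at hthis
    rw [Equiv.Perm.one_apply]
    exact hrowinj x hthis
  have hmul : θ * θ = 1 := Equiv.ext fun x => by
    rw [Equiv.Perm.mul_apply, h2, Equiv.Perm.one_apply]
  refine ⟨hfpf, hmul, ?_⟩
  by_cases hEx : ∃ s : Fin n, s ≠ L ⟨0, h0⟩ ⟨0, h0⟩ ∧ ∀ i, L i (θ i) ≠ s
  · -- some symbol s ≠ c never of the form L i (θ i): Klein four group acts freely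
    obtain ⟨s, hsne, hsno⟩ := hEx
    obtain ⟨σf, hσ⟩ : ∃ f : Fin n → Fin n, ∀ i, L i (f i) = s :=
      ⟨fun i => (Equiv.ofBijective (L i) (hL.1 i)).symm s,
        fun i => (Equiv.ofBijective (L i) (hL.1 i)).apply_symm_apply s⟩
    have huniq : ∀ i j, L i j = s → j = σf i := fun i j h =>
      hrowinj i (h.trans (hσ i).symm)
    have hσσ : ∀ i, σf (σf i) = i := fun i =>
      (huniq (σf i) i ((hs (σf i) i).trans (hσ i))).symm
    have hσne : ∀ i, σf i ≠ i := fun i h =>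
      hsne ((hσ i).symm.trans (by rw [h]; exact hdiag i))
    have hcomm : ∀ i, σf (θ i) = θ (σf i) := fun i =>
      (huniq (θ i) (θ (σf i)) (by rw [haut2]; exact hσ i)).symm
    have hσθne : ∀ i, σf i ≠ θ i := fun i h => hsno i (by rw [← h]; exact hσ i)
    have hθσne : ∀ i, θ (σf i) ≠ i := by
      intro i h
      have h4 := congrArg θ h
      rw [h2] at h4
      exact hσθne i h4
    set o : Fin n → Finset (Fin n) := fun i => {i, θ i, σf i, θ (σf i)} with hodef
    have homem : ∀ x i, x ∈ o i ↔ (x = i ∨ x = θ i ∨ x = σf i ∨ x = θ (σf i)) :=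
      fun x i => by simp [hodef]
    have hoθ : ∀ i, o (θ i) = o i := by
      intro i; ext x
      simp only [homem, h2, hcomm]
      tauto
    have hoσ : ∀ i, o (σf i) = o i := by
      intro i; ext x
      simp only [homem, hσσ]
      tauto
    have hoin : ∀ i j, j ∈ o i → o j = o i := by
      intro i j hj
      rcases (homem j i).mp hj with h | h | h | h <;> subst h
      · rfl
      · exact hoθ i
      · exact hoσ i
      · exact (hoθ (σf i)).trans (hoσ i)
    have hoself : ∀ i, i ∈ o i := fun i => (homem i i).mpr (Or.inl rfl)
    have hocard : ∀ i, (o i).card = 4 := by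
      intro i
      have e1 : i ∉ ({θ i, σf i, θ (σf i)} : Finset (Fin n)) := by
        simp only [Finset.mem_insert, Finset.mem_singleton]
        push_neg
        exact ⟨Ne.symm (hfpf i), Ne.symm (hσne i), Ne.symm (hθσne i)⟩
      have e2 : θ i ∉ ({σf i, θ (σf i)} : Finset (Fin n)) := by
        simp only [Finset.mem_insert, Finset.mem_singleton]
        push_neg
        exact ⟨Ne.symm (hσθne i), fun h => hσne i (θ.injective h).symm⟩
      have e3 : σf i ∉ ({θ (σf i)} : Finset (Fin n)) := by
        simp only [Finset.mem_singleton]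
        exact Ne.symm (hfpf (σf i))
      show ({i, θ i, σf i, θ (σf i)} : Finset (Fin n)).card = 4
      rw [Finset.card_insert_of_notMem e1, Finset.card_insert_of_notMem e2,
        Finset.card_insert_of_notMem e3, Finset.card_singleton]
    have hmin : ∀ (s t : Finset (Fin n)) (hs : s.Nonempty) (ht : t.Nonempty),
        s = t → s.min' hs = t.min' ht := by
      rintro s t hs' ht rfl; rfl
    obtain ⟨q, hqmem, hqeq'⟩ : ∃ q : Fin n → Fin n,
        (∀ i, q i ∈ o i) ∧ ∀ i j, o i = o j → q i = q j :=
      ⟨fun i => (o i).min' ⟨i, hoself i⟩, fun i => Finset.min'_mem _ _,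
        fun i j h => hmin _ _ _ _ h⟩
    have hqeq : ∀ i j, j ∈ o i → q j = q i := fun i j hj => hqeq' j i (hoin i j hj)
    have hfib : ∀ m ∈ Finset.univ.image q, (Finset.univ.filter fun x => q x = m) = o m := by
      intro m hm
      obtain ⟨i0, -, hi0⟩ := Finset.mem_image.mp hm
      have hm0 : m ∈ o i0 := hi0 ▸ hqmem i0
      have hqm : q m = m := (hqeq i0 m hm0).trans hi0
      ext x
      simp only [Finset.mem_filter, Finset.mem_univ, true_and]
      constructor
      · intro hx
        have h1 : m ∈ o x := hx ▸ hqmem x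
        have h2' : o m = o x := hoin x m h1
        rw [h2']
        exact hoself x
      · intro hx
        exact (hqeq m x hx).trans hqm
    have hsum := Finset.card_eq_sum_card_fiberwise
      (f := q) (s := (Finset.univ : Finset (Fin n))) (t := Finset.univ.image q)
      (fun x _ => Finset.mem_image_of_mem q (Finset.mem_univ x))
    rw [Finset.sum_congr rfl (fun m hm => by rw [hfib m hm, hocard m])] at hsum
    rw [Finset.sum_const, smul_eq_mul, Finset.card_univ, Fintype.card_fin] at hsum
    omega
  · -- every symbol ≠ c occurs as L i (θ i): count fibers, contradiction
    exfalso
    push_neg at hEx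
    have hgθ : ∀ x : Fin n, L (θ x) (θ (θ x)) = L x (θ x) := fun x => by
      rw [h2]; exact hs (θ x) x
    have hgc : ∀ x : Fin n, L x (θ x) ≠ L ⟨0, h0⟩ ⟨0, h0⟩ := fun x h =>
      hfpf x (hceq x (θ x) h)
    have hmemt : ∀ x ∈ (Finset.univ : Finset (Fin n)),
        L x (θ x) ∈ Finset.univ.erase (L ⟨0, h0⟩ ⟨0, h0⟩) :=
      fun x _ => Finset.mem_erase.mpr ⟨hgc x, Finset.mem_univ _⟩
    have hsum := Finset.card_eq_sum_card_fiberwise hmemt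
    have hlow : ∀ s' ∈ Finset.univ.erase (L ⟨0, h0⟩ ⟨0, h0⟩),
        2 ≤ (Finset.univ.filter fun x => L x (θ x) = s').card := by
      intro s' hs'
      obtain ⟨i, hi⟩ := hEx s' (Finset.mem_erase.mp hs').1
      refine Finset.one_lt_card.mpr ⟨i, ?_, θ i, ?_, Ne.symm (hfpf i)⟩
      · exact Finset.mem_filter.mpr ⟨Finset.mem_univ _, hi⟩
      · exact Finset.mem_filter.mpr ⟨Finset.mem_univ _, (hgθ i).trans hi⟩
    have hle := Finset.card_nsmul_le_sum _ _ _ hlow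
    rw [← hsum] at hle
    have hce : (Finset.univ.erase (L ⟨0, h0⟩ ⟨0, h0⟩)).card = n - 1 := by
      rw [Finset.card_erase_of_mem (Finset.mem_univ _), Finset.card_univ, Fintype.card_fin]
    rw [hce, Finset.card_univ, Fintype.card_fin, smul_eq_mul] at hle
    omega
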